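/- Let L > 0, C₁ > 0, C₂ > 0 be real numbers and q₁ < q₂ positive real numbers, and let h > 0. Set ħ₁ = (L/C₁)^{1/q₁}, ħ₂ = (L/C₂)^{1/q₂}, h* = (C₁/C₂)^{1/(q₂-q₁)}, and βᵢ = min(L, Cᵢ·h^{qᵢ}) for i = 1, 2. Let X₁ and X₂ be independent real random variables on a probability space (Ω, ℙ), with Xᵢ uniformly distributed on [0, βᵢ]. If h* ≤ min(ħ₁, ħ₂) and h* ≤ h ≤ ħ₂, then ℙ{X₁ ≤ X₂} = 1 - (1/2)·(h*/h)^{q₂-q₁}. -/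

import Mathlib

open MeasureTheory ProbabilityTheory

lemma unif_prob_le_aux {Ω : Type*} [MeasurableSpace Ω] (P : Measure Ω) [IsProbabilityMeasure P]
    (a b : ℝ) (ha : 0 < a) (hab : a ≤ b)
    (X₁ X₂ : Ω → ℝ) (hX₁ : Measurable X₁) (hX₂ : Measurable X₂)
    (hindep : IndepFun X₁ X₂ P)
    (h1 : Measure.map X₁ P = volume.withDensity
        (fun x => ENNReal.ofReal ((Set.Icc (0:ℝ) a).indicator (fun _ => 1 / a) x)))
    (h2 : Measure.map X₂ P = volume.withDensity
        (fun x => ENNReal.ofReal ((Set.Icc (0:ℝ) b).indicator (fun _ => 1 / b) x))) :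
    P {ω | X₁ ω ≤ X₂ ω} = ENNReal.ofReal (1 - a / (2 * b)) := by
  have hb : 0 < b := ha.trans_le hab
  have hS : MeasurableSet {p : ℝ × ℝ | p.1 ≤ p.2} :=
    measurableSet_le measurable_fst measurable_snd
  have hmap : P {ω | X₁ ω ≤ X₂ ω}
      = ((P.map X₁).prod (P.map X₂)) {p : ℝ × ℝ | p.1 ≤ p.2} := by
    rw [← (indepFun_iff_map_prod_eq_prod_map_map hX₁.aemeasurable hX₂.aemeasurable).mp hindep,
      Measure.map_apply (hX₁.prodMk hX₂) hS]
    rfl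
  rw [hmap, h1, h2]
  -- rewrite densities as indicator functions into ℝ≥0∞
  have hde : ∀ (c : ℝ), (fun x => ENNReal.ofReal ((Set.Icc (0:ℝ) c).indicator (fun _ => 1 / c) x))
      = (Set.Icc (0:ℝ) c).indicator (fun _ => ENNReal.ofReal (1 / c)) := by
    intro c
    funext x
    by_cases hx : x ∈ Set.Icc (0:ℝ) c <;> simp [hx]
  rw [hde a, hde b]
  have hgb : ∀ x : ℝ, (volume.withDensity
        ((Set.Icc (0:ℝ) b).indicator (fun _ => ENNReal.ofReal (1 / b)))) (Set.Ici x)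
      = ENNReal.ofReal (1 / b) * volume (Set.Icc (0:ℝ) b ∩ Set.Ici x) := by
    intro x
    rw [withDensity_apply _ measurableSet_Ici, lintegral_indicator measurableSet_Icc,
      Measure.restrict_restrict measurableSet_Icc, setLIntegral_const]
  have hprod : ((volume.withDensity ((Set.Icc (0:ℝ) a).indicator (fun _ => ENNReal.ofReal (1 / a)))).prod
      (volume.withDensity ((Set.Icc (0:ℝ) b).indicator (fun _ => ENNReal.ofReal (1 / b)))))
      {p : ℝ × ℝ | p.1 ≤ p.2}
      = ∫⁻ x, ((Set.Icc (0:ℝ) a).indicator (fun _ => ENNReal.ofReal (1 / a)) x) *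
          (volume.withDensity ((Set.Icc (0:ℝ) b).indicator (fun _ => ENNReal.ofReal (1 / b))))
            (Set.Ici x) ∂volume := by
    rw [Measure.prod_apply hS]
    have : ∀ x : ℝ, (Prod.mk x ⁻¹' {p : ℝ × ℝ | p.1 ≤ p.2}) = Set.Ici x := by
      intro x; ext y; simp
    simp_rw [this]
    rw [lintegral_withDensity_eq_lintegral_mul _
      ((measurable_const.indicator measurableSet_Icc)) ?_]
    · rfl
    · exact Antitone.measurable (fun x y hxy => measure_mono (Set.Ici_subset_Ici.mpr hxy))
  rw [hprod]
  -- turn into a set lintegral over Icc 0 a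
  have hind : (fun x => ((Set.Icc (0:ℝ) a).indicator (fun _ => ENNReal.ofReal (1 / a)) x) *
      (volume.withDensity ((Set.Icc (0:ℝ) b).indicator (fun _ => ENNReal.ofReal (1 / b))))
        (Set.Ici x))
      = (Set.Icc (0:ℝ) a).indicator (fun x => ENNReal.ofReal (1 / a) *
          (volume.withDensity ((Set.Icc (0:ℝ) b).indicator (fun _ => ENNReal.ofReal (1 / b))))
            (Set.Ici x)) := by
    funext x
    by_cases hx : x ∈ Set.Icc (0:ℝ) a <;> simp [hx]
  rw [hind, lintegral_indicator measurableSet_Icc]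
  have hcong : ∫⁻ x in Set.Icc (0:ℝ) a, ENNReal.ofReal (1 / a) *
      (volume.withDensity ((Set.Icc (0:ℝ) b).indicator (fun _ => ENNReal.ofReal (1 / b))))
        (Set.Ici x) ∂volume
      = ∫⁻ x in Set.Icc (0:ℝ) a, ENNReal.ofReal (1 / a * ((b - x) / b)) ∂volume := by
    refine setLIntegral_congr_fun measurableSet_Icc ?_
    intro x hx
    beta_reduce
    rw [hgb x]
    have h1 : Set.Icc (0:ℝ) b ∩ Set.Ici x = Set.Icc x b := by
      ext y
      simp only [Set.mem_inter_iff, Set.mem_Icc, Set.mem_Ici]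
      constructor
      · rintro ⟨⟨_, hyb⟩, hxy⟩; exact ⟨hxy, hyb⟩
      · rintro ⟨hxy, hyb⟩; exact ⟨⟨hx.1.trans hxy, hyb⟩, hxy⟩
    rw [h1, Real.volume_Icc, ← ENNReal.ofReal_mul (by positivity),
      ← ENNReal.ofReal_mul (by positivity)]
    congr 1
    field_simp
  rw [hcong]
  -- convert to a Bochner integral
  have hF : ∫⁻ x in Set.Icc (0:ℝ) a, ENNReal.ofReal (1 / a * ((b - x) / b)) ∂volume
      = ENNReal.ofReal (∫ x in Set.Icc (0:ℝ) a, 1 / a * ((b - x) / b) ∂volume) := by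
    rw [← ofReal_integral_eq_lintegral_ofReal]
    · exact Continuous.integrableOn_Icc
        (continuous_const.mul ((continuous_const.sub continuous_id).div_const b))
    · refine (ae_restrict_iff' measurableSet_Icc).mpr (Filter.Eventually.of_forall ?_)
      intro x hx
      have hbx : (0:ℝ) ≤ b - x := by
        have := hx.2.trans hab
        linarith
      have h1a : (0:ℝ) ≤ 1 / a := by positivity
      exact mul_nonneg h1a (div_nonneg hbx hb.le)
  rw [hF]
  congr 1
  have hIcc : ∫ x in Set.Icc (0:ℝ) a, 1 / a * ((b - x) / b) ∂volume
      = ∫ x in (0:ℝ)..a, 1 / a * ((b - x) / b) := by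
    rw [intervalIntegral.integral_of_le ha.le, MeasureTheory.integral_Icc_eq_integral_Ioc]
  rw [hIcc]
  have : ∫ x in (0:ℝ)..a, 1 / a * ((b - x) / b) = 1/(a*b) * ∫ x in (0:ℝ)..a, (b - x) := by
    rw [← intervalIntegral.integral_const_mul]
    congr 1; funext x; field_simp
  rw [this, intervalIntegral.integral_sub (intervalIntegrable_const (c := b)) intervalIntegral.intervalIntegrable_id,
    intervalIntegral.integral_const, integral_id]
  field_simp
  ring

/-- If h* ≤ min(ℏ₁,ℏ₂) and h* ≤ h ≤ ℏ₂, then P{X₁ ≤ X₂} = 1 - (1/2)·(h*/h)^(q₂-q₁). -/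
theorem prob_dist_case2_mid1
    {Ω : Type*} [MeasurableSpace Ω] (P : Measure Ω) [IsProbabilityMeasure P]
    (L C₁ C₂ q₁ q₂ h : ℝ) (hL : 0 < L) (hC₁ : 0 < C₁) (hC₂ : 0 < C₂)
    (hq₁ : 0 < q₁) (hq : q₁ < q₂) (hh : 0 < h)
    (ℏ₁ ℏ₂ hstar β₁ β₂ : ℝ)
    (hℏ₁ : ℏ₁ = (L / C₁) ^ (1 / q₁)) (hℏ₂ : ℏ₂ = (L / C₂) ^ (1 / q₂))
    (hstar_def : hstar = (C₁ / C₂) ^ (1 / (q₂ - q₁)))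
    (hβ₁ : β₁ = min L (C₁ * h ^ q₁)) (hβ₂ : β₂ = min L (C₂ * h ^ q₂))
    (X₁ X₂ : Ω → ℝ) (hX₁ : Measurable X₁) (hX₂ : Measurable X₂)
    (hindep : IndepFun X₁ X₂ P)
    (hX₁unif : Measure.map X₁ P =
      volume.withDensity
        (fun x => ENNReal.ofReal ((Set.Icc (0:ℝ) β₁).indicator (fun _ => 1 / β₁) x)))
    (hX₂unif : Measure.map X₂ P =
      volume.withDensity
        (fun x => ENNReal.ofReal ((Set.Icc (0:ℝ) β₂).indicator (fun _ => 1 / β₂) x)))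
    (hcase : hstar ≤ min ℏ₁ ℏ₂) (hrange₁ : hstar ≤ h) (hrange₂ : h ≤ ℏ₂) :
    P {ω | X₁ ω ≤ X₂ ω} = ENNReal.ofReal (1 - (1/2) * (hstar / h) ^ (q₂ - q₁)) := by
  have hq₂ : 0 < q₂ := hq₁.trans hq
  have hd : 0 < q₂ - q₁ := sub_pos.mpr hq
  have hstar_pos : 0 < hstar := by
    rw [hstar_def]; positivity
  -- h^q₂ etc
  have hhq₁ : 0 < h ^ q₁ := Real.rpow_pos_of_pos hh q₁
  have hhq₂ : 0 < h ^ q₂ := Real.rpow_pos_of_pos hh q₂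
  -- C₂ h^q₂ ≤ L
  have hbL : C₂ * h ^ q₂ ≤ L := by
    have h1 : h ^ q₂ ≤ ((L / C₂) ^ (1 / q₂)) ^ q₂ :=
      Real.rpow_le_rpow hh.le (hℏ₂ ▸ hrange₂) hq₂.le
    rw [← Real.rpow_mul (by positivity), one_div, inv_mul_cancel₀ hq₂.ne',
      Real.rpow_one, le_div_iff₀ hC₂] at h1
    linarith
  -- hstar ^ (q₂ - q₁) = C₁ / C₂
  have hstar_pow : hstar ^ (q₂ - q₁) = C₁ / C₂ := by
    rw [hstar_def, ← Real.rpow_mul (by positivity), one_div,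
      inv_mul_cancel₀ hd.ne', Real.rpow_one]
  -- C₁ h^q₁ ≤ C₂ h^q₂
  have hab : C₁ * h ^ q₁ ≤ C₂ * h ^ q₂ := by
    have h1 : hstar ^ (q₂ - q₁) ≤ h ^ (q₂ - q₁) :=
      Real.rpow_le_rpow hstar_pos.le hrange₁ hd.le
    rw [hstar_pow, Real.rpow_sub hh] at h1
    rw [div_le_div_iff₀ hC₂ hhq₁] at h1
    linarith
  have haL : C₁ * h ^ q₁ ≤ L := hab.trans hbL
  have hβ₁' : β₁ = C₁ * h ^ q₁ := by rw [hβ₁, min_eq_right haL]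
  have hβ₂' : β₂ = C₂ * h ^ q₂ := by rw [hβ₂, min_eq_right hbL]
  have ha : 0 < β₁ := by rw [hβ₁']; positivity
  have hab' : β₁ ≤ β₂ := by rw [hβ₁', hβ₂']; exact hab
  have key := unif_prob_le_aux P β₁ β₂ ha hab' X₁ X₂ hX₁ hX₂ hindep hX₁unif hX₂unif
  rw [key]
  congr 1
  have hratio : (hstar / h) ^ (q₂ - q₁) = β₁ / β₂ := by
    rw [Real.div_rpow hstar_pos.le hh.le, hstar_pow, Real.rpow_sub hh, hβ₁', hβ₂']
    field_simp
  rw [hratio]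
  ring
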